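/- Let G be a finite solvable group and let p, q, r be three distinct primes dividing |G|. Then G contains an element whose order is the product of two of these three primes (i.e., an element of order pq, pr, or qr). -/

import Mathlib

/-- A group `H` is a `σ`-group if every prime dividing its order lies in `σ`. -/
def IsSigmaGroup (σ : Set ℕ) (H : Type*) [Group H] : Prop :=
  ∀ p : ℕ, p.Prime → p ∣ Nat.card H → p ∈ σ

/-- The prime graph (Gruenberg–Kegel graph) of a group `G`, as a graph on `ℕ`:
two distinct primes `p, q` are adjacent iff `G` has an element of order `p * q`. -/
def primeGraph (G : Type*) [Group G] : SimpleGraph ℕ where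
  Adj p q := p ≠ q ∧ p.Prime ∧ q.Prime ∧ ∃ g : G, orderOf g = p * q
  symm := by
    constructor
    rintro p q ⟨h1, h2, h3, g, hg⟩
    exact ⟨h1.symm, h3, h2, g, hg.trans (mul_comm p q)⟩
  loopless := by constructor; rintro p ⟨h, -⟩; exact h rfl

/-- The vertex set of the prime graph of `G`: the primes dividing `|G|`. -/
def primeVerts (G : Type*) [Group G] : Set ℕ :=
  {p | p.Prime ∧ p ∣ Nat.card G}

/-- `σ` is a cut-set of `Γ(G)`: deleting the vertices of `σ` disconnects the graph. -/
def IsCutSet (G : Type*) [Group G] (σ : Set ℕ) : Prop :=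
  ¬ ((primeGraph G).induce (primeVerts G \ σ)).Preconnected

/-- A cut-set is minimal if no proper subset of it is a cut-set. -/
def IsMinimalCutSet (G : Type*) [Group G] (σ : Set ℕ) : Prop :=
  IsCutSet G σ ∧ ∀ τ : Set ℕ, τ ⊂ σ → ¬ IsCutSet G τ

/-- `O_σ(G)`: the largest normal `σ`-subgroup of `G` (the join of all normal
`σ`-subgroups, realized as a normal closure so that it is normal by definition). -/
def sigmaCore (σ : Set ℕ) (G : Type*) [Group G] : Subgroup G :=
  Subgroup.normalClosure {x : G | ∃ H : Subgroup G, H.Normal ∧ IsSigmaGroup σ H ∧ x ∈ H}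

instance sigmaCore_normal (σ : Set ℕ) (G : Type*) [Group G] : (sigmaCore σ G).Normal :=
  Subgroup.normalClosure_normal

/-- The Fitting subgroup of `G`: the join of all nilpotent normal subgroups. -/
def fittingSubgroup (G : Type*) [Group G] : Subgroup G :=
  Subgroup.normalClosure {x : G | ∃ H : Subgroup G, H.Normal ∧ Group.IsNilpotent H ∧ x ∈ H}

instance fittingSubgroup_normal (G : Type*) [Group G] : (fittingSubgroup G).Normal :=
  Subgroup.normalClosure_normal

/-- The factor `H/K` (for `K ⊴ G`), i.e. the image of `H` in `G/K`, is nilpotent. -/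
def NilpotentFactor {G : Type*} [Group G] (K H : Subgroup G) (hK : K.Normal) : Prop :=
  letI := hK
  Group.IsNilpotent (H.map (QuotientGroup.mk' K))

/-- The factor `H/K` (for `K ⊴ G`), i.e. the image of `H` in `G/K`, is a `σ`-group. -/
def SigmaFactor (σ : Set ℕ) {G : Type*} [Group G] (K H : Subgroup G) (hK : K.Normal) : Prop :=
  letI := hK
  IsSigmaGroup σ (H.map (QuotientGroup.mk' K))

/-- The quotient `G/K` is nilpotent. -/
def QuotNilpotent {G : Type*} [Group G] (K : Subgroup G) (hK : K.Normal) : Prop :=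
  letI := hK
  Group.IsNilpotent (G ⧸ K)

/-- `G` has a normal series of length `n` with nilpotent factors. -/
def HasNilpotentSeries (G : Type*) [Group G] (n : ℕ) : Prop :=
  ∃ (f : Fin (n + 1) → Subgroup G) (hN : ∀ i, (f i).Normal),
    f 0 = ⊥ ∧ f (Fin.last n) = ⊤ ∧ Monotone f ∧
    ∀ i : Fin n, NilpotentFactor (f i.castSucc) (f i.succ) (hN i.castSucc)

/-- The Fitting length `ℓ_F(G)`: the minimal length of a normal series of `G`
with nilpotent factors. -/
noncomputable def fittingLength (G : Type*) [Group G] : ℕ :=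
  sInf {n | HasNilpotentSeries G n}

/-- The Fitting length of the quotient `G/K` is at most `m`. -/
def QuotFittingLengthLE {G : Type*} [Group G] (K : Subgroup G) (hK : K.Normal) (m : ℕ) : Prop :=
  letI := hK
  fittingLength (G ⧸ K) ≤ m

/-- `ℓ_σ(G) ≤ k`: `G` has a normal series all of whose factors are `σ`-groups or
`σ'`-groups, with at most `k` factors that are `σ`-groups. -/
def SigmaLengthLE (σ : Set ℕ) (G : Type*) [Group G] (k : ℕ) : Prop :=
  ∃ (n : ℕ) (f : Fin (n + 1) → Subgroup G) (hN : ∀ i, (f i).Normal),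
    f 0 = ⊥ ∧ f (Fin.last n) = ⊤ ∧ Monotone f ∧
    (∀ i : Fin n,
      SigmaFactor σ (f i.castSucc) (f i.succ) (hN i.castSucc) ∨
      SigmaFactor σᶜ (f i.castSucc) (f i.succ) (hN i.castSucc)) ∧
    Nat.card {i : Fin n // SigmaFactor σ (f i.castSucc) (f i.succ) (hN i.castSucc)} ≤ k

/-- The derived length of `G`. -/
noncomputable def derivedLength (G : Type*) [Group G] : ℕ :=
  sInf {n | derivedSeries G n = ⊥}

/-- `π₁` and `π₂` are the vertex sets of the two connected components of `Γ(G) − σ`. -/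
def IsPiComponents (G : Type*) [Group G] (σ π₁ π₂ : Set ℕ) : Prop :=
  π₁.Nonempty ∧ π₂.Nonempty ∧ Disjoint π₁ π₂ ∧ π₁ ∪ π₂ = primeVerts G \ σ ∧
  ((primeGraph G).induce π₁).Preconnected ∧ ((primeGraph G).induce π₂).Preconnected ∧
  ∀ a ∈ π₁, ∀ b ∈ π₂, ¬ (primeGraph G).Adj a b

/-- `π₁ = π₁(G)` and `π₂ = π₂(G)` relative to the cut-set `σ`: the vertex sets of the
two components of `Γ(G) − σ`, labelled so that `F(G/O_σ(G))` is a `π₁`-group. -/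
def IsPiPartition (G : Type*) [Group G] (σ π₁ π₂ : Set ℕ) : Prop :=
  IsPiComponents G σ π₁ π₂ ∧ IsSigmaGroup π₁ (fittingSubgroup (G ⧸ sigmaCore σ G))

/-- `G` is a Frobenius group: it has a nontrivial proper malnormal subgroup. -/
def IsFrobenius (G : Type*) [Group G] : Prop :=
  ∃ H : Subgroup G, ⊥ < H ∧ H < ⊤ ∧
    ∀ g : G, g ∉ H → H ⊓ H.map (MulAut.conj g).toMonoidHom = ⊥

/-- `G` is a Frobenius group with Frobenius kernel `K`. -/
def IsFrobeniusWithKernel (G : Type*) [Group G] (K : Subgroup G) : Prop :=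
  K.Normal ∧ ∃ H : Subgroup G, ⊥ < H ∧ H < ⊤ ∧
    (∀ g : G, g ∉ H → H ⊓ H.map (MulAut.conj g).toMonoidHom = ⊥) ∧
    K ⊓ H = ⊥ ∧ K ⊔ H = ⊤

/-- `G` is a `2`-Frobenius group. -/
def Is2Frobenius (G : Type*) [Group G] : Prop :=
  ∃ (F₁ F₂ : Subgroup G) (h₁ : F₁.Normal) (_h₂ : F₂.Normal), F₁ ≤ F₂ ∧
    IsFrobeniusWithKernel F₂ (F₁.subgroupOf F₂) ∧
    (letI := h₁
     IsFrobeniusWithKernel (G ⧸ F₁) (F₂.map (QuotientGroup.mk' F₁)))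

/-- The second Fitting subgroup `F₂(G)`: the preimage in `G` of `F(G/F(G))`. -/
def secondFittingSubgroup (G : Type*) [Group G] : Subgroup G :=
  (fittingSubgroup (G ⧸ fittingSubgroup G)).comap (QuotientGroup.mk' (fittingSubgroup G))

instance secondFittingSubgroup_normal (G : Type*) [Group G] :
    (secondFittingSubgroup G).Normal :=
  Subgroup.Normal.comap inferInstance _


open Subgroup

set_option linter.unusedSectionVars false

section Basic
variable {G : Type*} [Group G] [Finite G]

lemma aux_exists_orderOf_eq_of_dvd {g : G} {m : ℕ} (h : m ∣ orderOf g) :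
    ∃ h : G, orderOf h = m :=
  ⟨g ^ (orderOf g / m), orderOf_pow_orderOf_div (orderOf_pos g).ne' h⟩

lemma aux_lift_order (B : Subgroup G) [B.Normal] {m : ℕ}
    (x : G ⧸ B) (hx : orderOf x = m) : ∃ g : G, orderOf g = m := by
  obtain ⟨g, rfl⟩ := QuotientGroup.mk'_surjective B x
  exact aux_exists_orderOf_eq_of_dvd (hx ▸ orderOf_map_dvd (QuotientGroup.mk' B) g)

lemma aux_order_mul {x y : G} (h : Commute x y) {a b : ℕ} (hx : orderOf x = a)
    (hy : orderOf y = b) (hab : Nat.Coprime a b) : orderOf (x * y) = a * b := by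
  subst hx hy; exact h.orderOf_mul_eq_mul_orderOf_of_coprime hab

end Basic

open scoped commutatorElement

section LemmaA
variable (G : Type*) [Group G] [Finite G]

/-- Lemma A : nontrivial solvable group has a nontrivial normal abelian p-subgroup. -/
lemma aux_exists_normal_abelian_pgroup [Group.IsSolvable G] [Nontrivial G] :
    ∃ (t : ℕ) (B : Subgroup G), t.Prime ∧ B.Normal ∧ B ≠ ⊥ ∧ IsPGroup t B ∧
      ∀ x ∈ B, ∀ y ∈ B, x * y = y * x := by
  classical
  have hex : ∃ n, derivedSeries G n = ⊥ := Group.IsSolvable.solvable (G := G)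
  set n := Nat.find hex with hn
  have hbot : derivedSeries G n = ⊥ := Nat.find_spec hex
  have hn0 : n ≠ 0 := by
    intro h
    rw [h, derivedSeries_zero] at hbot
    exact bot_ne_top (α := Subgroup G) hbot.symm
  set A := derivedSeries G (n - 1) with hA
  have hAne : A ≠ ⊥ := Nat.find_min hex (Nat.pred_lt hn0)
  have hAnormal : A.Normal := derivedSeries_normal G (n - 1)
  have hAcomm : ∀ x ∈ A, ∀ y ∈ A, x * y = y * x := by
    intro x hx y hy
    have : ⁅x, y⁆ ∈ ⁅A, A⁆ := commutator_mem_commutator hx hy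
    have h2 : ⁅A, A⁆ = ⊥ := by
      have := derivedSeries_succ G (n - 1)
      rw [Nat.sub_add_cancel (Nat.one_le_iff_ne_zero.mpr hn0)] at this
      rw [← hA] at this
      rw [← this]
      exact hbot
    rw [h2, Subgroup.mem_bot] at this
    exact commutatorElement_eq_one_iff_mul_comm.mp this
  -- a prime dividing |A|
  have hcard : Nat.card A ≠ 1 := by
    simpa [Subgroup.card_eq_one] using hAne
  obtain ⟨t, ht, htdvd⟩ := Nat.exists_prime_and_dvd hcard
  haveI : Fact t.Prime := ⟨ht⟩
  obtain ⟨a, ha⟩ := exists_prime_orderOf_dvd_card' (G := A) t htdvd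
  -- B := t-torsion of A
  refine ⟨t, {
    carrier := {g | g ∈ A ∧ ∃ k : ℕ, g ^ t ^ k = 1}
    one_mem' := ⟨A.one_mem, 0, one_pow _⟩
    mul_mem' := ?_
    inv_mem' := ?_ }, ht, ?_, ?_, ?_, ?_⟩
  · rintro x y ⟨hxA, k, hk⟩ ⟨hyA, l, hl⟩
    refine ⟨A.mul_mem hxA hyA, k + l, ?_⟩
    have hc : Commute x y := hAcomm x hxA y hyA
    rw [hc.mul_pow, pow_add]
    rw [pow_mul, hk, one_pow, one_mul, mul_comm (t ^ k), pow_mul, hl, one_pow]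
  · rintro x ⟨hxA, k, hk⟩
    exact ⟨A.inv_mem hxA, k, by rw [inv_pow, hk, inv_one]⟩
  · constructor
    rintro x ⟨hxA, k, hk⟩ g
    refine ⟨hAnormal.conj_mem x hxA g, k, ?_⟩
    rw [conj_pow, hk, mul_one, mul_inv_cancel]
  · -- ≠ ⊥
    intro h
    have hmem : (a : G) ∈ (⊥ : Subgroup G) := by
      rw [← h]
      refine ⟨a.2, 1, ?_⟩
      rw [pow_one, ← Subgroup.coe_pow, ← ha, pow_orderOf_eq_one, Subgroup.coe_one]
    rw [Subgroup.mem_bot] at hmem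
    have : orderOf a = 1 := by
      rw [← orderOf_coe, hmem, orderOf_one]
    rw [ha] at this
    exact ht.one_lt.ne' this
  · rintro ⟨x, hxA, k, hk⟩
    exact ⟨k, by ext; simpa using hk⟩
  · rintro x ⟨hxA, _⟩ y ⟨hyA, _⟩
    exact hAcomm x hxA y hyA
end LemmaA

section CardComap
variable {G : Type*} [Group G] [Finite G]

lemma aux_card_comap (B : Subgroup G) [B.Normal] (H : Subgroup (G ⧸ B)) :
    Nat.card (H.comap (QuotientGroup.mk' B)) = Nat.card B * Nat.card H := by
  set K := H.comap (QuotientGroup.mk' B) with hK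
  have hBK : B ≤ K := by
    intro b hb
    have h1 : ((b : G) : G ⧸ B) = 1 := (QuotientGroup.eq_one_iff b).mpr hb
    show QuotientGroup.mk' B b ∈ H
    rw [QuotientGroup.mk'_apply, h1]
    exact H.one_mem
  set φ := (QuotientGroup.mk' B).comp K.subtype with hφ
  have hker : φ.ker = B.subgroupOf K := by
    ext x
    simp only [hφ, MonoidHom.mem_ker, MonoidHom.comp_apply, Subgroup.mem_subgroupOf]
    rw [Subgroup.coe_subtype, QuotientGroup.mk'_apply, QuotientGroup.eq_one_iff]
  have hrange : φ.range = H := by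
    rw [hφ, MonoidHom.range_comp, Subgroup.range_subtype]
    exact Subgroup.map_comap_eq_self_of_surjective (QuotientGroup.mk'_surjective B) H
  have h1 : Nat.card K = Nat.card (K ⧸ φ.ker) * Nat.card φ.ker :=
    Subgroup.card_eq_card_quotient_mul_card_subgroup φ.ker
  have h2 : Nat.card (K ⧸ φ.ker) = Nat.card H := by
    rw [← hrange]
    exact Nat.card_congr (QuotientGroup.quotientKerEquivRange φ).toEquiv
  have h3 : Nat.card φ.ker = Nat.card B := by
    rw [hker]
    exact Nat.card_congr (Subgroup.subgroupOfEquivOfLe hBK).toEquiv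
  rw [h1, h2, h3, mul_comm]

end CardComap

lemma aux_le_comap {G : Type*} [Group G] (B : Subgroup G) [B.Normal] (H : Subgroup (G ⧸ B)) :
    B ≤ H.comap (QuotientGroup.mk' B) := by
  intro b hb
  have h1 : ((b : G) : G ⧸ B) = 1 := (QuotientGroup.eq_one_iff b).mpr hb
  show QuotientGroup.mk' B b ∈ H
  rw [QuotientGroup.mk'_apply, h1]
  exact H.one_mem

universe u

lemma aux_two_primes : ∀ (n : ℕ) (G : Type u) [Group G] [Finite G] [Group.IsSolvable G],
    Nat.card G ≤ n → ∀ q r : ℕ, q.Prime → r.Prime → q ≠ r →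
    q ∣ Nat.card G → r ∣ Nat.card G →
    ∃ H : Subgroup G, q ∣ Nat.card H ∧ r ∣ Nat.card H ∧
      ∀ s : ℕ, s.Prime → s ∣ Nat.card H → s = q ∨ s = r := by
  intro n
  induction n with
  | zero =>
    intro G _ _ _ hle
    exact absurd (lt_of_lt_of_le Nat.card_pos hle) (lt_irrefl 0)
  | succ n ih =>
    intro G _ _ _ hle q r hq hr hqr hdq hdr
    haveI : Nontrivial G := Finite.one_lt_card_iff_nontrivial.mp
      (lt_of_lt_of_le hq.one_lt (Nat.le_of_dvd Nat.card_pos hdq))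
    obtain ⟨t, B, ht, hBn, hBbot, hBp, hBcomm⟩ := aux_exists_normal_abelian_pgroup G
    haveI := hBn
    haveI : Fact t.Prime := ⟨ht⟩
    obtain ⟨k, hkcard⟩ := (IsPGroup.iff_card (p := t) (G := B)).mp hBp
    have hBgt1 : 1 < Nat.card B := by
      rcases Nat.lt_or_ge 1 (Nat.card B) with h | h
      · exact h
      · interval_cases h' : Nat.card B
        · exact absurd h' Nat.card_pos.ne'
        · exact absurd (Subgroup.card_eq_one.mp h') hBbot
    have hk0 : k ≠ 0 := by rintro rfl; rw [hkcard] at hBgt1; simp at hBgt1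
    have hGeq : Nat.card G = Nat.card (G ⧸ B) * Nat.card B :=
      Subgroup.card_eq_card_quotient_mul_card_subgroup B
    have hQpos : 0 < Nat.card (G ⧸ B) := Nat.card_pos
    have hQlt : Nat.card (G ⧸ B) < Nat.card G := by
      rw [hGeq]
      nlinarith
    have hQle : Nat.card (G ⧸ B) ≤ n := Nat.lt_succ_iff.mp (lt_of_lt_of_le hQlt hle)
    have hdvdQ : ∀ s : ℕ, s.Prime → s ∣ Nat.card G → s ≠ t → s ∣ Nat.card (G ⧸ B) := by
      intro s hs hsd hst
      rw [hGeq] at hsd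
      rcases (Nat.Prime.dvd_mul hs).mp hsd with h | h
      · exact h
      · rw [hkcard] at h
        exact absurd ((Nat.prime_dvd_prime_iff_eq hs ht).mp (hs.dvd_of_dvd_pow h)) hst
    have hprimes_tk : ∀ m : ℕ, ∀ s : ℕ, s.Prime → s ∣ Nat.card B * m → s = t ∨ s ∣ m := by
      intro m s hs hsd
      rw [hkcard] at hsd
      rcases (Nat.Prime.dvd_mul hs).mp hsd with h | h
      · exact Or.inl ((Nat.prime_dvd_prime_iff_eq hs ht).mp (hs.dvd_of_dvd_pow h))
      · exact Or.inr h
    have htdvdB : t ∣ Nat.card B := by rw [hkcard]; exact dvd_pow_self t hk0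
    by_cases htq : t = q
    · haveI : Fact r.Prime := ⟨hr⟩
      obtain ⟨x, hx⟩ := exists_prime_orderOf_dvd_card' (G := G ⧸ B) r
        (hdvdQ r hr hdr (by rw [htq]; exact fun h => hqr h.symm))
      refine ⟨(Subgroup.zpowers x).comap (QuotientGroup.mk' B), ?_, ?_, ?_⟩
      · rw [aux_card_comap]
        exact dvd_mul_of_dvd_left (htq ▸ htdvdB) _
      · rw [aux_card_comap, Nat.card_zpowers, hx]
        exact dvd_mul_left r _
      · intro s hs hsd
        rw [aux_card_comap] at hsd
        rcases hprimes_tk _ s hs hsd with h | h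
        · exact Or.inl (h.trans htq)
        · rw [Nat.card_zpowers, hx] at h
          exact Or.inr ((Nat.prime_dvd_prime_iff_eq hs hr).mp h)
    · by_cases htr : t = r
      · haveI : Fact q.Prime := ⟨hq⟩
        obtain ⟨x, hx⟩ := exists_prime_orderOf_dvd_card' (G := G ⧸ B) q
          (hdvdQ q hq hdq (fun h => htq h.symm))
        refine ⟨(Subgroup.zpowers x).comap (QuotientGroup.mk' B), ?_, ?_, ?_⟩
        · rw [aux_card_comap, Nat.card_zpowers, hx]
          exact dvd_mul_left q _
        · rw [aux_card_comap]
          exact dvd_mul_of_dvd_left (htr ▸ htdvdB) _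
        · intro s hs hsd
          rw [aux_card_comap] at hsd
          rcases hprimes_tk _ s hs hsd with h | h
          · exact Or.inr (h.trans htr)
          · rw [Nat.card_zpowers, hx] at h
            exact Or.inl ((Nat.prime_dvd_prime_iff_eq hs hq).mp h)
      · obtain ⟨Hbar, hq1, hr1, hs1⟩ := ih (G ⧸ B) hQle q r hq hr hqr
          (hdvdQ q hq hdq (fun h => htq h.symm)) (hdvdQ r hr hdr (fun h => htr h.symm))
        set K := Hbar.comap (QuotientGroup.mk' B) with hKdef
        have hBK : B ≤ K := aux_le_comap B Hbar
        have hcardK : Nat.card K = Nat.card B * Nat.card Hbar := aux_card_comap B Hbar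
        set B' := B.subgroupOf K with hB'def
        haveI : B'.Normal := Subgroup.normal_subgroupOf
        have hcardB' : Nat.card B' = Nat.card B :=
          Nat.card_congr (Subgroup.subgroupOfEquivOfLe hBK).toEquiv
        have hidx : Nat.card B' * B'.index = Nat.card K := Subgroup.card_mul_index B'
        have hidx2 : B'.index = Nat.card Hbar := by
          rw [hcardB', hcardK] at hidx
          exact Nat.eq_of_mul_eq_mul_left (Nat.card_pos) hidx
        have hcop : Nat.Coprime (Nat.card B') B'.index := by
          rw [hcardB', hidx2]
          by_contra hcon
          obtain ⟨s, hs, hs1', hs2'⟩ := Nat.Prime.not_coprime_iff_dvd.mp hcon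
          rw [hkcard] at hs1'
          have hst : s = t := (Nat.prime_dvd_prime_iff_eq hs ht).mp (hs.dvd_of_dvd_pow hs1')
          rcases hs1 s hs hs2' with h | h
          · exact htq (hst ▸ h)
          · exact htr (hst ▸ h)
        obtain ⟨D, hD⟩ := Subgroup.exists_right_complement'_of_coprime hcop
        have hcardD2 : Nat.card D = Nat.card Hbar := by
          have h5 := hD.card_mul
          rw [hcardB', hcardK] at h5
          exact Nat.eq_of_mul_eq_mul_left Nat.card_pos h5
        refine ⟨D.map K.subtype, ?_⟩
        have hcardmap : Nat.card (D.map K.subtype) = Nat.card Hbar := by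
          rw [← hcardD2]
          exact (Nat.card_congr (Subgroup.equivMapOfInjective D K.subtype
            (Subgroup.subtype_injective K)).toEquiv).symm
        rw [hcardmap]
        exact ⟨hq1, hr1, hs1⟩

lemma aux_three_primes_sub : ∀ (n : ℕ) (G : Type u) [Group G] [Finite G] [Group.IsSolvable G],
    Nat.card G ≤ n → ∀ p q r : ℕ, p.Prime → q.Prime → r.Prime →
    p ≠ q → p ≠ r → q ≠ r →
    p ∣ Nat.card G → q ∣ Nat.card G → r ∣ Nat.card G →
    ∃ H : Subgroup G, p ∣ Nat.card H ∧ q ∣ Nat.card H ∧ r ∣ Nat.card H ∧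
      ∀ s : ℕ, s.Prime → s ∣ Nat.card H → s = p ∨ s = q ∨ s = r := by
  intro n
  induction n with
  | zero =>
    intro G _ _ _ hle
    exact absurd (lt_of_lt_of_le Nat.card_pos hle) (lt_irrefl 0)
  | succ n ih =>
    intro G _ _ _ hle p q r hp hq hr hpq hpr hqr hdp hdq hdr
    haveI : Nontrivial G := Finite.one_lt_card_iff_nontrivial.mp
      (lt_of_lt_of_le hq.one_lt (Nat.le_of_dvd Nat.card_pos hdq))
    obtain ⟨t, B, ht, hBn, hBbot, hBp, hBcomm⟩ := aux_exists_normal_abelian_pgroup G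
    haveI := hBn
    haveI : Fact t.Prime := ⟨ht⟩
    obtain ⟨k, hkcard⟩ := (IsPGroup.iff_card (p := t) (G := B)).mp hBp
    have hBgt1 : 1 < Nat.card B := by
      rcases Nat.lt_or_ge 1 (Nat.card B) with h | h
      · exact h
      · interval_cases h' : Nat.card B
        · exact absurd h' Nat.card_pos.ne'
        · exact absurd (Subgroup.card_eq_one.mp h') hBbot
    have hk0 : k ≠ 0 := by rintro rfl; rw [hkcard] at hBgt1; simp at hBgt1
    have hGeq : Nat.card G = Nat.card (G ⧸ B) * Nat.card B :=
      Subgroup.card_eq_card_quotient_mul_card_subgroup B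
    have hQpos : 0 < Nat.card (G ⧸ B) := Nat.card_pos
    have hQlt : Nat.card (G ⧸ B) < Nat.card G := by
      rw [hGeq]; nlinarith
    have hQle : Nat.card (G ⧸ B) ≤ n := Nat.lt_succ_iff.mp (lt_of_lt_of_le hQlt hle)
    have hdvdQ : ∀ s : ℕ, s.Prime → s ∣ Nat.card G → s ≠ t → s ∣ Nat.card (G ⧸ B) := by
      intro s hs hsd hst
      rw [hGeq] at hsd
      rcases (Nat.Prime.dvd_mul hs).mp hsd with h | h
      · exact h
      · rw [hkcard] at h
        exact absurd ((Nat.prime_dvd_prime_iff_eq hs ht).mp (hs.dvd_of_dvd_pow h)) hst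
    have hprimes_tk : ∀ m : ℕ, ∀ s : ℕ, s.Prime → s ∣ Nat.card B * m → s = t ∨ s ∣ m := by
      intro m s hs hsd
      rw [hkcard] at hsd
      rcases (Nat.Prime.dvd_mul hs).mp hsd with h | h
      · exact Or.inl ((Nat.prime_dvd_prime_iff_eq hs ht).mp (hs.dvd_of_dvd_pow h))
      · exact Or.inr h
    have htdvdB : t ∣ Nat.card B := by rw [hkcard]; exact dvd_pow_self t hk0
    have key : ∀ u v : ℕ, u.Prime → v.Prime → u ≠ v → u ≠ t → v ≠ t →
        u ∣ Nat.card G → v ∣ Nat.card G →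
        ∃ H : Subgroup G, (t ∣ Nat.card H ∧ u ∣ Nat.card H ∧ v ∣ Nat.card H) ∧
          ∀ s : ℕ, s.Prime → s ∣ Nat.card H → s = t ∨ s = u ∨ s = v := by
      intro u v hu hv huv hut hvt hdu hdv
      obtain ⟨Hbar, hu1, hv1, hs1⟩ := aux_two_primes (Nat.card (G ⧸ B)) (G ⧸ B)
        (le_refl _) u v hu hv huv (hdvdQ u hu hdu hut) (hdvdQ v hv hdv hvt)
      refine ⟨Hbar.comap (QuotientGroup.mk' B), ⟨?_, ?_, ?_⟩, ?_⟩
      · rw [aux_card_comap]; exact dvd_mul_of_dvd_left htdvdB _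
      · rw [aux_card_comap]; exact dvd_mul_of_dvd_right hu1 _
      · rw [aux_card_comap]; exact dvd_mul_of_dvd_right hv1 _
      · intro s hs hsd
        rw [aux_card_comap] at hsd
        rcases hprimes_tk _ s hs hsd with h | h
        · exact Or.inl h
        · exact Or.inr (hs1 s hs h)
    by_cases htp : t = p
    · obtain ⟨H, ⟨h1, h2, h3⟩, h4⟩ := key q r hq hr hqr
        (by rw [htp]; exact fun h => hpq h.symm) (by rw [htp]; exact fun h => hpr h.symm) hdq hdr
      exact ⟨H, htp ▸ h1, h2, h3, fun s hs hsd => by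
        rcases h4 s hs hsd with h | h | h
        · exact Or.inl (h.trans htp)
        · exact Or.inr (Or.inl h)
        · exact Or.inr (Or.inr h)⟩
    · by_cases htq : t = q
      · obtain ⟨H, ⟨h1, h2, h3⟩, h4⟩ := key p r hp hr hpr
          (fun h => htp h.symm) (by rw [htq]; exact fun h => hqr h.symm) hdp hdr
        exact ⟨H, h2, htq ▸ h1, h3, fun s hs hsd => by
          rcases h4 s hs hsd with h | h | h
          · exact Or.inr (Or.inl (h.trans htq))
          · exact Or.inl h
          · exact Or.inr (Or.inr h)⟩
      · by_cases htr : t = r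
        · obtain ⟨H, ⟨h1, h2, h3⟩, h4⟩ := key p q hp hq hpq
            (fun h => htp h.symm) (fun h => htq h.symm) hdp hdq
          exact ⟨H, h2, h3, htr ▸ h1, fun s hs hsd => by
            rcases h4 s hs hsd with h | h | h
            · exact Or.inr (Or.inr (h.trans htr))
            · exact Or.inl h
            · exact Or.inr (Or.inl h)⟩
        · obtain ⟨Hbar, hp1, hq1, hr1, hs1⟩ := ih (G ⧸ B) hQle p q r hp hq hr hpq hpr hqr
            (hdvdQ p hp hdp (fun h => htp h.symm)) (hdvdQ q hq hdq (fun h => htq h.symm))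
            (hdvdQ r hr hdr (fun h => htr h.symm))
          set K := Hbar.comap (QuotientGroup.mk' B) with hKdef
          have hBK : B ≤ K := aux_le_comap B Hbar
          have hcardK : Nat.card K = Nat.card B * Nat.card Hbar := aux_card_comap B Hbar
          set B' := B.subgroupOf K with hB'def
          haveI : B'.Normal := Subgroup.normal_subgroupOf
          have hcardB' : Nat.card B' = Nat.card B :=
            Nat.card_congr (Subgroup.subgroupOfEquivOfLe hBK).toEquiv
          have hidx : Nat.card B' * B'.index = Nat.card K := Subgroup.card_mul_index B'
          have hidx2 : B'.index = Nat.card Hbar := by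
            rw [hcardB', hcardK] at hidx
            exact Nat.eq_of_mul_eq_mul_left (Nat.card_pos) hidx
          have hcop : Nat.Coprime (Nat.card B') B'.index := by
            rw [hcardB', hidx2]
            by_contra hcon
            obtain ⟨s, hs, hs1', hs2'⟩ := Nat.Prime.not_coprime_iff_dvd.mp hcon
            rw [hkcard] at hs1'
            have hst : s = t := (Nat.prime_dvd_prime_iff_eq hs ht).mp (hs.dvd_of_dvd_pow hs1')
            rcases hs1 s hs hs2' with h | h | h
            · exact htp (hst ▸ h)
            · exact htq (hst ▸ h)
            · exact htr (hst ▸ h)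
          obtain ⟨D, hD⟩ := Subgroup.exists_right_complement'_of_coprime hcop
          have hcardD2 : Nat.card D = Nat.card Hbar := by
            have h5 := hD.card_mul
            rw [hcardB', hcardK] at h5
            exact Nat.eq_of_mul_eq_mul_left Nat.card_pos h5
          refine ⟨D.map K.subtype, ?_⟩
          have hcardmap : Nat.card (D.map K.subtype) = Nat.card Hbar := by
            rw [← hcardD2]
            exact (Nat.card_congr (Subgroup.equivMapOfInjective D K.subtype
              (Subgroup.subtype_injective K)).toEquiv).symm
          rw [hcardmap]
          exact ⟨hp1, hq1, hr1, hs1⟩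

section Facts
variable {A : Type*} [CommGroup A]
open Finset

lemma aux_prod_pow_eq_one {r : ℕ} (hr : 0 < r) (ρ : MulAut A) (hρ : ρ ^ r = 1)
    (hf : ∀ c : A, ρ c = c → c = 1) (b : A) :
    ∏ j ∈ Finset.range r, (ρ ^ j) b = 1 := by
  apply hf
  have h1 : ρ (∏ j ∈ Finset.range r, (ρ ^ j) b) = ∏ j ∈ Finset.range r, (ρ ^ (j + 1)) b := by
    rw [map_prod]
    exact Finset.prod_congr rfl fun j _ => by rw [pow_succ', MulAut.mul_apply]
  have e1 := Finset.prod_range_succ' (fun j => (ρ ^ j) b) r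
  have e2 := Finset.prod_range_succ (fun j => (ρ ^ j) b) r
  have e3 : (ρ ^ r) b = (ρ ^ 0) b := by rw [hρ, pow_zero]
  rw [e2, e3] at e1
  rw [h1]
  exact (mul_right_cancel e1).symm

lemma aux_prod_pow_Ico {r : ℕ} (hr : 0 < r) (ρ : MulAut A) (hρ : ρ ^ r = 1)
    (hf : ∀ c : A, ρ c = c → c = 1) (b : A) :
    ∏ j ∈ Finset.Ico 1 r, (ρ ^ j) b = b⁻¹ := by
  have h1 := aux_prod_pow_eq_one hr ρ hρ hf b
  rw [Finset.range_eq_Ico, Finset.prod_eq_prod_Ico_succ_bot hr] at h1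
  simp only [pow_zero, MulAut.one_apply] at h1
  exact inv_eq_of_mul_eq_one_right h1 |>.symm

lemma aux_prod_zmod {q : ℕ} [NeZero q] (f : ℕ → A) :
    ∏ a : ZMod q, f (a.val) = ∏ i ∈ Finset.range q, f i := by
  refine Finset.prod_bij' (fun a _ => a.val) (fun i _ => (i : ZMod q)) ?_ ?_ ?_ ?_ ?_
  · intro a _
    exact Finset.mem_range.mpr (ZMod.val_lt a)
  · intro i _
    exact Finset.mem_univ _
  · intro a _
    simp [ZMod.natCast_val, ZMod.cast_id]
  · intro i hi
    exact ZMod.val_natCast_of_lt (Finset.mem_range.mp hi)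
  · intro a _
    rfl

end Facts

section Fact1
variable {A : Type*} [CommGroup A]
open Finset

lemma aux_pow_eq_of_cast_eq {M : Type*} [Monoid M] {q : ℕ} [NeZero q] (σ : M) (hσ : σ ^ q = 1)
    {e1 e2 : ℕ} (h : (e1 : ZMod q) = (e2 : ZMod q)) : σ ^ e1 = σ ^ e2 := by
  rw [pow_eq_pow_mod e1 hσ, pow_eq_pow_mod e2 hσ]
  rw [ZMod.natCast_eq_natCast_iff'] at h
  rw [h]

lemma aux_fact1 {q : ℕ} (hq : q.Prime) (σ τ : MulAut A) (hcomm : Commute σ τ)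
    (hσ : σ ^ q = 1) (hτ : τ ^ q = 1)
    (hfτ : ∀ c : A, τ c = c → c = 1)
    (hfστ : ∀ m : ℕ, ∀ c : A, (σ * τ ^ m) c = c → c = 1)
    (b : A) : b ^ q = 1 := by
  haveI : NeZero q := ⟨hq.pos.ne'⟩
  haveI : Fact q.Prime := ⟨hq⟩
  have hP1 : ∏ i ∈ Finset.range q, ∏ j ∈ Finset.range q, ((σ ^ i) * (τ ^ j)) b = 1 := by
    apply Finset.prod_eq_one
    intro i _
    have h2 : ∏ j ∈ Finset.range q, ((σ ^ i) * (τ ^ j)) b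
        = (σ ^ i) (∏ j ∈ Finset.range q, (τ ^ j) b) := by
      rw [map_prod]
      exact Finset.prod_congr rfl fun j _ => rfl
    rw [h2, aux_prod_pow_eq_one hq.pos τ hτ hfτ b, map_one]
  have hsplit : ∏ i ∈ Finset.range q, ∏ j ∈ Finset.range q, ((σ ^ i) * (τ ^ j)) b
      = (∏ j ∈ Finset.range q, (τ ^ j) b) *
        ∏ i ∈ Finset.Ico 1 q, ∏ j ∈ Finset.range q, ((σ ^ i) * (τ ^ j)) b := by
    rw [Finset.range_eq_Ico, Finset.prod_eq_prod_Ico_succ_bot hq.pos]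
    have : ∏ j ∈ Finset.range q, ((σ ^ 0) * (τ ^ j)) b = ∏ j ∈ Finset.range q, (τ ^ j) b :=
      Finset.prod_congr rfl fun j _ => by rw [pow_zero, one_mul]
    rw [← Finset.range_eq_Ico, this]
  have hinner : ∀ i ∈ Finset.Ico 1 q, ∏ j ∈ Finset.range q, ((σ ^ i) * (τ ^ j)) b
      = ∏ m ∈ Finset.range q, ((σ * τ ^ m) ^ i) b := by
    intro i hi
    obtain ⟨hi1, hi2⟩ := Finset.mem_Ico.mp hi
    rw [← aux_prod_zmod (fun j => ((σ ^ i) * (τ ^ j)) b),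
        ← aux_prod_zmod (fun m => ((σ * τ ^ m) ^ i) b)]
    have hi0 : (i : ZMod q) ≠ 0 := by
      rw [Ne, ZMod.natCast_eq_zero_iff]
      exact fun h => Nat.not_dvd_of_pos_of_lt hi1 hi2 h
    have key : ∀ a : ZMod q, ((σ * τ ^ a.val) ^ i) b = ((σ ^ i) * (τ ^ ((a * i : ZMod q)).val)) b := by
      intro a
      congr 1
      rw [(hcomm.pow_right a.val).mul_pow, ← pow_mul]
      congr 1
      apply aux_pow_eq_of_cast_eq τ hτ
      rw [Nat.cast_mul, ZMod.natCast_val, ZMod.cast_id, ZMod.natCast_val, ZMod.cast_id]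
    calc ∏ a : ZMod q, ((σ ^ i) * (τ ^ a.val)) b
        = ∏ a : ZMod q, ((σ ^ i) * (τ ^ ((a * i : ZMod q)).val)) b := by
          exact (Equiv.prod_comp (Equiv.mulRight₀ (i : ZMod q) hi0)
            (fun a => ((σ ^ i) * (τ ^ a.val)) b)).symm
      _ = ∏ a : ZMod q, ((σ * τ ^ a.val) ^ i) b := by
          exact Finset.prod_congr rfl fun a _ => (key a).symm
  have hIco : ∏ i ∈ Finset.Ico 1 q, ∏ j ∈ Finset.range q, ((σ ^ i) * (τ ^ j)) b
      = (b⁻¹) ^ q := by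
    rw [Finset.prod_congr rfl hinner, Finset.prod_comm]
    have hinner2 : ∀ m ∈ Finset.range q, ∏ i ∈ Finset.Ico 1 q, ((σ * τ ^ m) ^ i) b = b⁻¹ := by
      intro m _
      apply aux_prod_pow_Ico hq.pos (σ * τ ^ m) _ (hfστ m) b
      rw [(hcomm.pow_right m).mul_pow, ← pow_mul, mul_comm m q, pow_mul, hτ, one_pow, hσ, one_mul]
    rw [Finset.prod_congr rfl hinner2, Finset.prod_const, Finset.card_range]
  rw [hsplit, aux_prod_pow_eq_one hq.pos τ hτ hfτ b, one_mul, hIco, inv_pow] at hP1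
  exact inv_injective (by rw [hP1, inv_one])

end Fact1

section Fact2
variable {A : Type*} [CommGroup A]
open Finset

lemma aux_fact2 {q r k : ℕ} (hq : q.Prime) (hr : r.Prime) (σ υ : MulAut A)
    (hσ : σ ^ q = 1) (hυ : υ ^ r = 1)
    (hrel : υ * σ * υ⁻¹ = σ ^ k)
    (hk : ∀ j : ℕ, 0 < j → j < r → ((k : ZMod q)) ^ j ≠ 1)
    (hfσ : ∀ c : A, σ c = c → c = 1)
    (hfυ : ∀ c : A, υ c = c → c = 1)
    (b : A) : b ^ q = 1 := by
  haveI : NeZero q := ⟨hq.pos.ne'⟩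
  haveI : Fact q.Prime := ⟨hq⟩
  have hrel1 : ∀ m : ℕ, υ * σ ^ m * υ⁻¹ = σ ^ (m * k) := by
    intro m
    calc υ * σ ^ m * υ⁻¹ = (υ * σ * υ⁻¹) ^ m := (conj_pow ..).symm
      _ = (σ ^ k) ^ m := by rw [hrel]
      _ = σ ^ (m * k) := by rw [← pow_mul, mul_comm]
  have hrelj : ∀ j m : ℕ, υ ^ j * σ ^ m = σ ^ (m * k ^ j) * υ ^ j := by
    intro j
    induction j with
    | zero => intro m; simp
    | succ j ih =>
      intro m
      calc υ ^ (j + 1) * σ ^ m = υ * (υ ^ j * σ ^ m) := by rw [pow_succ', mul_assoc]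
        _ = υ * (σ ^ (m * k ^ j) * υ ^ j) := by rw [ih m]
        _ = (υ * σ ^ (m * k ^ j) * υ⁻¹) * (υ * υ ^ j) := by group
        _ = σ ^ (m * k ^ j * k) * (υ * υ ^ j) := by rw [hrel1]
        _ = σ ^ (m * k ^ (j + 1)) * υ ^ (j + 1) := by
            rw [mul_assoc m, ← pow_succ, ← pow_succ']
  set κ : ZMod q := (k : ZMod q) with hκ
  set ρ : ZMod q → MulAut A := fun c => σ ^ c.val * υ * (σ ^ c.val)⁻¹ with hρ
  have hρj : ∀ (c : ZMod q) (j : ℕ),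
      (ρ c) ^ j = σ ^ ((c * (1 - κ ^ j)).val) * υ ^ j := by
    intro c j
    rw [hρ]
    show (σ ^ c.val * υ * (σ ^ c.val)⁻¹) ^ j = _
    rw [conj_pow, mul_inv_eq_iff_eq_mul, mul_assoc, hrelj j c.val, ← mul_assoc, ← pow_add]
    congr 1
    apply aux_pow_eq_of_cast_eq σ hσ
    push_cast [ZMod.natCast_val, ZMod.cast_id]
    ring
  have hP1 : ∏ a : ZMod q, ∏ j ∈ Finset.range r, ((σ ^ a.val) * (υ ^ j)) b = 1 := by
    apply Finset.prod_eq_one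
    intro a _
    have h2 : ∏ j ∈ Finset.range r, ((σ ^ a.val) * (υ ^ j)) b
        = (σ ^ a.val) (∏ j ∈ Finset.range r, (υ ^ j) b) := by
      rw [map_prod]
      exact Finset.prod_congr rfl fun j _ => rfl
    rw [h2, aux_prod_pow_eq_one hr.pos υ hυ hfυ b, map_one]
  rw [Finset.prod_comm] at hP1
  have hQ0 : ∏ a : ZMod q, ((σ ^ a.val) * (υ ^ 0)) b = 1 := by
    have h3 : ∀ a : ZMod q, ((σ ^ a.val) * (υ ^ 0)) b = (σ ^ a.val) b := by
      intro a; rw [pow_zero, mul_one]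
    rw [Finset.prod_congr rfl fun a _ => h3 a, aux_prod_zmod (fun i => (σ ^ i) b),
      aux_prod_pow_eq_one hq.pos σ hσ hfσ b]
  have hQj : ∀ j ∈ Finset.Ico 1 r, ∏ a : ZMod q, ((σ ^ a.val) * (υ ^ j)) b
      = ∏ c : ZMod q, ((ρ c) ^ j) b := by
    intro j hj
    obtain ⟨hj1, hj2⟩ := Finset.mem_Ico.mp hj
    have hu : (1 - κ ^ j) ≠ 0 := by
      intro h
      apply hk j hj1 hj2
      rwa [sub_eq_zero, eq_comm] at h
    calc ∏ a : ZMod q, ((σ ^ a.val) * (υ ^ j)) b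
        = ∏ c : ZMod q, ((σ ^ ((c * (1 - κ ^ j)).val)) * (υ ^ j)) b :=
          (Equiv.prod_comp (Equiv.mulRight₀ (1 - κ ^ j) hu)
            (fun a => ((σ ^ a.val) * (υ ^ j)) b)).symm
      _ = ∏ c : ZMod q, ((ρ c) ^ j) b :=
          Finset.prod_congr rfl fun c _ => by rw [hρj c j]
  have hsplit : ∏ j ∈ Finset.range r, ∏ a : ZMod q, ((σ ^ a.val) * (υ ^ j)) b
      = (∏ a : ZMod q, ((σ ^ a.val) * (υ ^ 0)) b) *
        ∏ j ∈ Finset.Ico 1 r, ∏ a : ZMod q, ((σ ^ a.val) * (υ ^ j)) b := by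
    rw [Finset.range_eq_Ico, Finset.prod_eq_prod_Ico_succ_bot hr.pos]
  rw [hsplit, hQ0, one_mul, Finset.prod_congr rfl hQj, Finset.prod_comm] at hP1
  have hIco : ∀ c : ZMod q, c ∈ Finset.univ →
      ∏ j ∈ Finset.Ico 1 r, ((ρ c) ^ j) b = b⁻¹ := by
    intro c _
    apply aux_prod_pow_Ico hr.pos (ρ c) _ _ b
    · rw [hρ]
      show (σ ^ c.val * υ * (σ ^ c.val)⁻¹) ^ r = 1
      rw [conj_pow, hυ, mul_one, mul_inv_cancel]
    · intro x hx
      rw [hρ] at hx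
      have hx2 : υ ((σ ^ c.val)⁻¹ x) = (σ ^ c.val)⁻¹ x := by
        have := congrArg ((σ ^ c.val)⁻¹ : MulAut A) hx
        simpa using this
      have hx3 : (σ ^ c.val)⁻¹ x = 1 := hfυ _ hx2
      have := congrArg (σ ^ c.val : MulAut A) hx3
      simpa using this
  rw [Finset.prod_congr rfl hIco, Finset.prod_const, Finset.card_univ, ZMod.card, inv_pow] at hP1
  exact inv_injective (by rw [hP1, inv_one])

end Fact2

section Core
variable {G : Type*} [Group G] [Finite G]

lemma aux_conj_pow_iter {y z : G} {k : ℕ} (h : y * z * y⁻¹ = z ^ k) :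
    ∀ j : ℕ, y ^ j * z * (y ^ j)⁻¹ = z ^ (k ^ j) := by
  intro j
  induction j with
  | zero => simp
  | succ j ih =>
    have h1 : y ^ (j + 1) * z * (y ^ (j + 1))⁻¹ = y * (y ^ j * z * (y ^ j)⁻¹) * y⁻¹ := by
      rw [pow_succ']; group
    rw [h1, ih]
    calc y * z ^ k ^ j * y⁻¹ = (y * z * y⁻¹) ^ k ^ j := (conj_pow ..).symm
      _ = z ^ (k ^ (j + 1)) := by rw [h, ← pow_mul, pow_succ, mul_comm (k ^ j) k, pow_mul]
      
lemma aux_fpf {B : Subgroup G} [B.Normal]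
    {p u : ℕ} (hp : p.Prime) (hu : u.Prime) (hpu : p ≠ u) (hBp : IsPGroup p B)
    (hno : ∀ g : G, orderOf g ≠ p * u)
    {x : G} (hx : orderOf x = u) (b : ↥B) (hb : MulAut.conjNormal x b = b) : b = 1 := by
  by_contra hb1
  obtain ⟨j, hj⟩ : ∃ j : ℕ, orderOf (b : G) = p ^ j := by
    obtain ⟨c, hc⟩ := hBp b
    have : (b : G) ^ p ^ c = 1 := by
      rw [← Subgroup.coe_pow, hc, Subgroup.coe_one]
    obtain ⟨j, _, hj⟩ := (Nat.dvd_prime_pow hp).mp (orderOf_dvd_of_pow_eq_one this)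
    exact ⟨j, hj⟩
  have hj0 : j ≠ 0 := by
    rintro rfl
    rw [pow_zero, orderOf_eq_one_iff] at hj
    exact hb1 (by ext; simpa using hj)
  set b' := (b : G) ^ (p ^ j / p) with hb'
  have hb'o : orderOf b' = p := by
    rw [hb', ← hj]
    exact orderOf_pow_orderOf_div (by rw [hj]; exact (pow_pos hp.pos j).ne')
      (by rw [hj]; exact dvd_pow_self p hj0)
  have hcomm : Commute x (b : G) := by
    have h2 : x * (b : G) * x⁻¹ = (b : G) := by
      have := congrArg (Subtype.val) hb
      rwa [MulAut.conjNormal_apply] at this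
    exact mul_inv_eq_iff_eq_mul.mp h2
  have hcomm' : Commute x b' := hcomm.pow_right _
  exact hno (x * b')
    ((aux_order_mul hcomm' hx hb'o ((Nat.coprime_primes hu hp).mpr
      (fun h => hpu h.symm))).trans (mul_comm u p))
end Core

section Core2
variable {G : Type*} [Group G] [Finite G]

lemma aux_zpowers_eq {z w : G} (hzw : z ∈ Subgroup.zpowers w)
    (hcard : orderOf w ≤ orderOf z) : w ∈ Subgroup.zpowers z := by
  have hle : Subgroup.zpowers z ≤ Subgroup.zpowers w := Subgroup.zpowers_le.mpr hzw
  have heq : Subgroup.zpowers z = Subgroup.zpowers w := by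
    have h1 : (Subgroup.zpowers z : Set G) ⊆ (Subgroup.zpowers w : Set G) := hle
    have h2 : (Subgroup.zpowers w : Set G).ncard ≤ (Subgroup.zpowers z : Set G).ncard := by
      rw [← Nat.card_coe_set_eq, ← Nat.card_coe_set_eq]
      show Nat.card (Subgroup.zpowers w) ≤ Nat.card (Subgroup.zpowers z)
      rw [Nat.card_zpowers, Nat.card_zpowers]
      exact hcard
    have := Set.eq_of_subset_of_ncard_le h1 h2 (Set.toFinite _)
    exact SetLike.ext' this
  rw [heq]
  exact Subgroup.mem_zpowers w

lemma aux_core2 {p q r : ℕ} (hp : p.Prime) (hq : q.Prime) (hr : r.Prime)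
    (hpq : p ≠ q) (hpr : p ≠ r) (hqr : q ≠ r)
    (B : Subgroup G) [B.Normal] (hBcomm : ∀ x ∈ B, ∀ y ∈ B, x * y = y * x)
    (hBp : IsPGroup p B) (hBbot : B ≠ ⊥)
    (M : Subgroup G) (hMcomm : ∀ x ∈ M, ∀ y ∈ M, x * y = y * x)
    (hMq : IsPGroup q M) (hMbot : M ≠ ⊥)
    {y : G} (hy : orderOf y = r) (hyM : ∀ m ∈ M, y * m * y⁻¹ ∈ M)
    (hno : ∀ g : G, orderOf g ≠ p * q ∧ orderOf g ≠ p * r ∧ orderOf g ≠ q * r) : False := by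
  letI : CommGroup ↥B := { mul_comm := fun a b => Subtype.ext (hBcomm a a.2 b b.2) }
  haveI : Fact q.Prime := ⟨hq⟩
  set χ : G →* MulAut ↥B := MulAut.conjNormal with hχ
  -- fixed-point-freeness for elements of order q and r
  have hfq : ∀ x : G, orderOf x = q → ∀ b : ↥B, χ x b = b → b = 1 := by
    intro x hx b hb
    exact aux_fpf hp hq hpq hBp (fun g => (hno g).1) hx b hb
  have hfr : ∀ x : G, orderOf x = r → ∀ b : ↥B, χ x b = b → b = 1 := by
    intro x hx b hb
    exact aux_fpf hp hr hpr hBp (fun g => (hno g).2.1) hx b hb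
  -- element of order q in M
  have hqM : q ∣ Nat.card M := by
    obtain ⟨k, hk⟩ := (IsPGroup.iff_card (p := q) (G := M)).mp hMq
    have hk0 : k ≠ 0 := by
      rintro rfl
      exact hMbot (Subgroup.card_eq_one.mp (by rw [hk, pow_zero]))
    rw [hk]; exact dvd_pow_self q hk0
  obtain ⟨ζ, hζ⟩ := exists_prime_orderOf_dvd_card' (G := ↥M) q hqM
  set z : G := (ζ : G) with hz
  have hzM : z ∈ M := ζ.2
  have hzo : orderOf z = q := by rw [hz, Subgroup.orderOf_coe, hζ]
  have hzq : z ^ q = 1 := by rw [← hzo]; exact pow_orderOf_eq_one z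
  -- the final contradiction from ∀ b, b ^ q = 1
  have hdone : (∀ b : ↥B, b ^ q = 1) → False := by
    intro hall
    obtain ⟨b, hbB, hb1⟩ : ∃ b : G, b ∈ B ∧ b ≠ 1 := by
      by_contra hcon
      push_neg at hcon
      exact hBbot (Subgroup.eq_bot_iff_forall B |>.mpr (fun x hx => by
        by_contra hx1; exact hx1 (by exact (hcon x hx ▸ rfl))))
    have hbq : b ^ q = 1 := by
      have h := congrArg (Subtype.val) (hall ⟨b, hbB⟩)
      simpa using h
    obtain ⟨c, hc⟩ := hBp ⟨b, hbB⟩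
    have hbp : b ^ p ^ c = 1 := by
      have h := congrArg (Subtype.val) hc
      simpa using h
    have hdvd1 : orderOf b ∣ q := orderOf_dvd_of_pow_eq_one hbq
    have hdvd2 : orderOf b ∣ p ^ c := orderOf_dvd_of_pow_eq_one hbp
    have hb1' : orderOf b ≠ 1 := fun h => hb1 (orderOf_eq_one_iff.mp h)
    rcases (Nat.dvd_prime hq).mp hdvd1 with h | h
    · exact hb1' h
    · rw [h] at hdvd2
      obtain ⟨i, hi, hqi⟩ := (Nat.dvd_prime_pow hp).mp hdvd2
      rcases Nat.eq_zero_or_pos i with hi0 | hi0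
      · rw [hi0, pow_zero] at hqi; exact hq.one_lt.ne' hqi
      · exact hpq ((Nat.prime_dvd_prime_iff_eq hp hq).mp (hqi ▸ dvd_pow_self p hi0.ne'))
  by_cases hcase : ∃ w, w ∈ M ∧ w ^ q = 1 ∧ w ∉ Subgroup.zpowers z
  · obtain ⟨w, hwM, hwq, hwz⟩ := hcase
    have hw1 : w ≠ 1 := fun h => hwz (h ▸ (Subgroup.zpowers z).one_mem)
    have hwo : orderOf w = q := orderOf_eq_prime hwq hw1
    have hzwcomm : Commute z w := hMcomm z hzM w hwM
    apply hdone
    intro b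
    apply aux_fact1 hq (χ z) (χ w) (hzwcomm.map χ)
      (by rw [← map_pow, hzq, map_one]) (by rw [← map_pow, hwq, map_one])
      (hfq w hwo) ?_ b
    intro m c hc
    have he : χ z * (χ w) ^ m = χ (z * w ^ m) := by rw [map_mul, map_pow]
    rw [he] at hc
    have heM : z * w ^ m ∈ M := M.mul_mem hzM (M.pow_mem hwM m)
    have heq1 : (z * w ^ m) ^ q = 1 := by
      rw [(hzwcomm.pow_right m).mul_pow, hzq, one_mul, ← pow_mul, mul_comm m q, pow_mul, hwq,
        one_pow]
    have hene : z * w ^ m ≠ 1 := by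
      intro h
      have hzin : z ∈ Subgroup.zpowers w := by
        rw [eq_inv_of_mul_eq_one_left h]
        exact (Subgroup.zpowers w).inv_mem ((Subgroup.zpowers w).pow_mem (Subgroup.mem_zpowers w) m)
      exact hwz (aux_zpowers_eq hzin (by rw [hzo, hwo]))
    exact hfq (z * w ^ m) (orderOf_eq_prime heq1 hene) c hc
  · push_neg at hcase
    -- y z y⁻¹ ∈ zpowers z
    have hconjM : y * z * y⁻¹ ∈ M := hyM z hzM
    have hconjq : (y * z * y⁻¹) ^ q = 1 := by rw [conj_pow, hzq, mul_one, mul_inv_cancel]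
    have hconjz : y * z * y⁻¹ ∈ Subgroup.zpowers z := hcase _ hconjM hconjq
    obtain ⟨k, hk⟩ := Submonoid.mem_powers_iff _ _ |>.mp
      (mem_powers_iff_mem_zpowers.mpr hconjz)
    -- hk : z ^ k = y * z * y⁻¹
    haveI : NeZero q := ⟨hq.pos.ne'⟩
    have hkk : ∀ j : ℕ, 0 < j → j < r → ((k : ZMod q)) ^ j ≠ 1 := by
      intro j hj1 hj2 hkj
      have h1 : y ^ j * z * (y ^ j)⁻¹ = z ^ (k ^ j) := aux_conj_pow_iter hk.symm j
      have h2 : z ^ (k ^ j) = z ^ 1 := by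
        apply aux_pow_eq_of_cast_eq z hzq
        push_cast
        rw [hkj]
      rw [h2, pow_one] at h1
      have hcyj : Commute z (y ^ j) := (mul_inv_eq_iff_eq_mul.mp h1).symm
      have hyjo : orderOf (y ^ j) = r := by
        rw [orderOf_pow' y hj1.ne', hy]
        have hcop : Nat.gcd r j = 1 :=
          (Nat.Prime.coprime_iff_not_dvd hr).mpr (Nat.not_dvd_of_pos_of_lt hj1 hj2)
        rw [hcop, Nat.div_one]
      exact (hno (z * y ^ j)).2.2 (aux_order_mul hcyj hzo hyjo
        ((Nat.coprime_primes hq hr).mpr hqr))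
    apply hdone
    intro b
    apply aux_fact2 hq hr (χ z) (χ y)
      (by rw [← map_pow, hzq, map_one])
      (by rw [← map_pow, ← hy, pow_orderOf_eq_one, map_one])
      (by rw [← map_pow, ← map_inv, ← map_mul, ← map_mul, ← hk])
      hkk (hfq z hzo) (hfr y hy) b

end Core2

section After
variable {G : Type*} [Group G] [Finite G]

lemma aux_after2 {t a b : ℕ} (ht : t.Prime) (ha : a.Prime) (hb : b.Prime)
    (hta : t ≠ a) (htb : t ≠ b) (hab : a ≠ b)
    (B : Subgroup G) [B.Normal] (hBcomm : ∀ x ∈ B, ∀ y ∈ B, x * y = y * x)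
    (hBt : IsPGroup t B) (hBbot : B ≠ ⊥)
    (H : Subgroup G) (M₀ : Subgroup ↥H) (hM₀n : M₀.Normal)
    (hM₀comm : ∀ x ∈ M₀, ∀ y ∈ M₀, x * y = y * x)
    (hM₀a : IsPGroup a ↥M₀) (hM₀bot : M₀ ≠ ⊥)
    (hbH : b ∣ Nat.card ↥H)
    (hno : ∀ g : G, orderOf g ≠ t * a ∧ orderOf g ≠ t * b ∧ orderOf g ≠ a * b) : False := by
  haveI : Fact b.Prime := ⟨hb⟩
  obtain ⟨yh, hyh⟩ := exists_prime_orderOf_dvd_card' (G := ↥H) b hbH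
  set y : G := ((yh : ↥H) : G) with hy
  have hyo : orderOf y = b := by rw [hy, Subgroup.orderOf_coe, hyh]
  set M : Subgroup G := M₀.map H.subtype with hM
  have hmemM : ∀ x : G, x ∈ M ↔ ∃ m : ↥H, m ∈ M₀ ∧ (m : G) = x := by
    intro x
    simp [hM, Subgroup.mem_map, Subgroup.coe_subtype]
  have hMcomm : ∀ x ∈ M, ∀ z ∈ M, x * z = z * x := by
    intro x hx z hz
    obtain ⟨mx, hmx, hmx2⟩ := (hmemM x).mp hx
    obtain ⟨mz, hmz, hmz2⟩ := (hmemM z).mp hz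
    rw [← hmx2, ← hmz2]
    have := hM₀comm mx hmx mz hmz
    exact_mod_cast congrArg (Subtype.val) this
  have hMa : IsPGroup a ↥M := by
    intro x
    obtain ⟨m, hm, hm2⟩ := (hmemM x).mp x.2
    obtain ⟨c, hc⟩ := hM₀a ⟨m, hm⟩
    refine ⟨c, ?_⟩
    have h1 := congrArg (Subtype.val) (congrArg (Subtype.val) hc)
    ext
    push_cast at h1 ⊢
    rw [← hm2] at *
    simpa using h1
  have hMbot : M ≠ ⊥ := by
    obtain ⟨m, hmM₀, hm1⟩ : ∃ m : ↥H, m ∈ M₀ ∧ m ≠ 1 := by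
      by_contra hcon
      push_neg at hcon
      exact hM₀bot ((Subgroup.eq_bot_iff_forall M₀).mpr hcon)
    intro h
    have hmem : (m : G) ∈ (⊥ : Subgroup G) := h ▸ (hmemM _).mpr ⟨m, hmM₀, rfl⟩
    rw [Subgroup.mem_bot] at hmem
    exact hm1 (by ext; simpa using hmem)
  have hyM : ∀ m ∈ M, y * m * y⁻¹ ∈ M := by
    intro m hm
    obtain ⟨m₀, hm₀, hm₀2⟩ := (hmemM m).mp hm
    refine (hmemM _).mpr ⟨yh * m₀ * yh⁻¹, hM₀n.conj_mem m₀ hm₀ yh, ?_⟩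
    push_cast
    rw [hm₀2]
  exact aux_core2 ht ha hb hta htb hab B hBcomm hBt hBbot M hMcomm hMa hMbot hyo hyM hno

lemma aux_after (G : Type*) [Group G] [Finite G] [Group.IsSolvable G]
    {t u v : ℕ} (ht : t.Prime) (hu : u.Prime) (hv : v.Prime)
    (htu : t ≠ u) (htv : t ≠ v) (huv : u ≠ v)
    (B : Subgroup G) [B.Normal] (hBcomm : ∀ x ∈ B, ∀ y ∈ B, x * y = y * x)
    (hBt : IsPGroup t B) (hBbot : B ≠ ⊥)
    (hquot : ¬ t ∣ Nat.card (G ⧸ B))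
    (hud : u ∣ Nat.card G) (hvd : v ∣ Nat.card G)
    (hπ : ∀ s : ℕ, s.Prime → s ∣ Nat.card G → s = t ∨ s = u ∨ s = v)
    (hno : ∀ g : G, orderOf g ≠ t * u ∧ orderOf g ≠ t * v ∧ orderOf g ≠ u * v) : False := by
  haveI : Fact t.Prime := ⟨ht⟩
  obtain ⟨k, hkcard⟩ := (IsPGroup.iff_card (p := t) (G := B)).mp hBt
  have hGeq : Nat.card G = Nat.card (G ⧸ B) * Nat.card B :=
    Subgroup.card_eq_card_quotient_mul_card_subgroup B
  have hcop : Nat.Coprime (Nat.card B) B.index := by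
    rw [hkcard, Subgroup.index_eq_card]
    exact Nat.Coprime.pow_left _ ((ht.coprime_iff_not_dvd).mpr hquot)
  obtain ⟨H, hH⟩ := Subgroup.exists_right_complement'_of_coprime hcop
  have hcardH : Nat.card B * Nat.card H = Nat.card G := hH.card_mul
  have hcardH2 : Nat.card ↥H = Nat.card (G ⧸ B) := by
    rw [hGeq, mul_comm (Nat.card (G ⧸ B))] at hcardH
    exact Nat.eq_of_mul_eq_mul_left Nat.card_pos hcardH
  have hnotdvdB : ∀ s : ℕ, s.Prime → s ≠ t → ¬ s ∣ Nat.card B := by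
    intro s hs hst hdvd
    rw [hkcard] at hdvd
    exact hst ((Nat.prime_dvd_prime_iff_eq hs ht).mp (hs.dvd_of_dvd_pow hdvd))
  have huH : u ∣ Nat.card ↥H := by
    rcases (Nat.Prime.dvd_mul hu).mp (hcardH ▸ hud) with h | h
    · exact absurd h (hnotdvdB u hu (fun h2 => htu h2.symm))
    · exact h
  have hvH : v ∣ Nat.card ↥H := by
    rcases (Nat.Prime.dvd_mul hv).mp (hcardH ▸ hvd) with h | h
    · exact absurd h (hnotdvdB v hv (fun h2 => htv h2.symm))
    · exact h
  have htH : ¬ t ∣ Nat.card ↥H := by rw [hcardH2]; exact hquot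
  haveI : Nontrivial ↥H := Finite.one_lt_card_iff_nontrivial.mp
    (lt_of_lt_of_le hu.one_lt (Nat.le_of_dvd Nat.card_pos huH))
  obtain ⟨w, M₀, hw, hM₀n, hM₀bot, hM₀w, hM₀comm⟩ := aux_exists_normal_abelian_pgroup ↥H
  have hwH : w ∣ Nat.card ↥H := by
    haveI : Fact w.Prime := ⟨hw⟩
    obtain ⟨c, hc⟩ := (IsPGroup.iff_card (p := w) (G := M₀)).mp hM₀w
    have hc0 : c ≠ 0 := by
      rintro rfl
      exact hM₀bot (Subgroup.card_eq_one.mp (by rw [hc, pow_zero]))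
    exact dvd_trans (hc ▸ dvd_pow_self w hc0) (Subgroup.card_subgroup_dvd_card M₀)
  have hwG : w ∣ Nat.card G := hwH.trans (Subgroup.card_subgroup_dvd_card H)
  rcases hπ w hw hwG with hwt | hwu | hwv
  · exact htH (hwt ▸ hwH)
  · subst hwu
    exact aux_after2 ht hw hv htu htv huv B hBcomm hBt hBbot H M₀ hM₀n hM₀comm hM₀w hM₀bot hvH hno
  · subst hwv
    exact aux_after2 ht hw hu htv htu (fun h => huv h.symm) B hBcomm hBt hBbot H M₀ hM₀n hM₀comm
      hM₀w hM₀bot huH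
      (fun g => ⟨(hno g).2.1, (hno g).1, fun h => (hno g).2.2 (h.trans (mul_comm w u))⟩)

end After

lemma aux_main : ∀ (n : ℕ) (G : Type u) [Group G] [Finite G] [Group.IsSolvable G],
    Nat.card G ≤ n → ∀ p q r : ℕ, p.Prime → q.Prime → r.Prime →
    p ≠ q → p ≠ r → q ≠ r →
    p ∣ Nat.card G → q ∣ Nat.card G → r ∣ Nat.card G →
    (∀ s : ℕ, s.Prime → s ∣ Nat.card G → s = p ∨ s = q ∨ s = r) →
    ∃ g : G, orderOf g = p * q ∨ orderOf g = p * r ∨ orderOf g = q * r := by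
  intro n
  induction n with
  | zero =>
    intro G _ _ _ hle
    exact absurd (lt_of_lt_of_le Nat.card_pos hle) (lt_irrefl 0)
  | succ n ih =>
    intro G _ _ _ hle p q r hp hq hr hpq hpr hqr hdp hdq hdr hπ
    haveI : Nontrivial G := Finite.one_lt_card_iff_nontrivial.mp
      (lt_of_lt_of_le hq.one_lt (Nat.le_of_dvd Nat.card_pos hdq))
    obtain ⟨t, B, ht, hBn, hBbot, hBp, hBcomm⟩ := aux_exists_normal_abelian_pgroup G
    haveI := hBn
    haveI : Fact t.Prime := ⟨ht⟩
    obtain ⟨k, hkcard⟩ := (IsPGroup.iff_card (p := t) (G := B)).mp hBp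
    have hBgt1 : 1 < Nat.card B := by
      rcases Nat.lt_or_ge 1 (Nat.card B) with h | h
      · exact h
      · interval_cases h' : Nat.card B
        · exact absurd h' Nat.card_pos.ne'
        · exact absurd (Subgroup.card_eq_one.mp h') hBbot
    have hk0 : k ≠ 0 := by rintro rfl; rw [hkcard] at hBgt1; simp at hBgt1
    have hGeq : Nat.card G = Nat.card (G ⧸ B) * Nat.card B :=
      Subgroup.card_eq_card_quotient_mul_card_subgroup B
    have hQlt : Nat.card (G ⧸ B) < Nat.card G := by
      have hQpos : 0 < Nat.card (G ⧸ B) := Nat.card_pos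
      rw [hGeq]; nlinarith
    have hQle : Nat.card (G ⧸ B) ≤ n := Nat.lt_succ_iff.mp (lt_of_lt_of_le hQlt hle)
    have hdvdQ : ∀ s : ℕ, s.Prime → s ∣ Nat.card G → s ≠ t → s ∣ Nat.card (G ⧸ B) := by
      intro s hs hsd hst
      rw [hGeq] at hsd
      rcases (Nat.Prime.dvd_mul hs).mp hsd with h | h
      · exact h
      · rw [hkcard] at h
        exact absurd ((Nat.prime_dvd_prime_iff_eq hs ht).mp (hs.dvd_of_dvd_pow h)) hst
    by_cases hquot : t ∣ Nat.card (G ⧸ B)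
    · have hdvd3 : ∀ s : ℕ, s.Prime → s ∣ Nat.card G → s ∣ Nat.card (G ⧸ B) := by
        intro s hs hsd
        by_cases hst : s = t
        · exact hst ▸ hquot
        · exact hdvdQ s hs hsd hst
      have hQdvdG : Nat.card (G ⧸ B) ∣ Nat.card G := ⟨Nat.card B, hGeq⟩
      obtain ⟨gbar, hgbar⟩ := ih (G ⧸ B) hQle p q r hp hq hr hpq hpr hqr
        (hdvd3 p hp hdp) (hdvd3 q hq hdq) (hdvd3 r hr hdr)
        (fun s hs hsd => hπ s hs (hsd.trans hQdvdG))
      rcases hgbar with h | h | h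
      · obtain ⟨g, hg⟩ := aux_lift_order B gbar h; exact ⟨g, Or.inl hg⟩
      · obtain ⟨g, hg⟩ := aux_lift_order B gbar h; exact ⟨g, Or.inr (Or.inl hg)⟩
      · obtain ⟨g, hg⟩ := aux_lift_order B gbar h; exact ⟨g, Or.inr (Or.inr hg)⟩
    · have htG : t ∣ Nat.card G :=
        (hkcard ▸ dvd_pow_self t hk0).trans (Subgroup.card_subgroup_dvd_card B)
      by_contra hcon
      push_neg at hcon
      have hprod : ∀ (a c : ℕ), (a = p ∨ a = q ∨ a = r) → (c = p ∨ c = q ∨ c = r) → a ≠ c →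
          ∀ g : G, orderOf g ≠ a * c := by
        intro a c ha hc hac g
        obtain ⟨h1, h2, h3⟩ := hcon g
        rcases ha with rfl | rfl | rfl <;> rcases hc with rfl | rfl | rfl <;>
          first
            | exact absurd rfl hac
            | exact h1
            | exact h2
            | exact h3
            | (rw [mul_comm]; exact h1)
            | (rw [mul_comm]; exact h2)
            | (rw [mul_comm]; exact h3)
      rcases hπ t ht htG with rfl | rfl | rfl
      · exact aux_after G ht hq hr hpq hpr hqr B hBcomm hBp hBbot hquot hdq hdr hπ
          (fun g => ⟨(hcon g).1, (hcon g).2.1, (hcon g).2.2⟩)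
      · exact aux_after G ht hp hr (fun h => hpq h.symm) hqr hpr B hBcomm hBp hBbot hquot hdp hdr
          (fun s hs hsd => by
            rcases hπ s hs hsd with h | h | h
            exacts [Or.inr (Or.inl h), Or.inl h, Or.inr (Or.inr h)])
          (fun g => ⟨hprod t p (Or.inr (Or.inl rfl)) (Or.inl rfl) (fun h => hpq h.symm) g,
            hprod t r (Or.inr (Or.inl rfl)) (Or.inr (Or.inr rfl)) hqr g,
            hprod p r (Or.inl rfl) (Or.inr (Or.inr rfl)) hpr g⟩)
      · exact aux_after G ht hp hq (fun h => hpr h.symm) (fun h => hqr h.symm) hpq B hBcomm hBp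
          hBbot hquot hdp hdq
          (fun s hs hsd => by
            rcases hπ s hs hsd with h | h | h
            exacts [Or.inr (Or.inl h), Or.inr (Or.inr h), Or.inl h])
          (fun g => ⟨hprod t p (Or.inr (Or.inr rfl)) (Or.inl rfl) (fun h => hpr h.symm) g,
            hprod t q (Or.inr (Or.inr rfl)) (Or.inr (Or.inl rfl)) (fun h => hqr h.symm) g,
            hprod p q (Or.inl rfl) (Or.inr (Or.inl rfl)) hpq g⟩)


/-- **Lucido's three-primes lemma.** If `G` is a finite solvable group and `p, q, r` are
distinct primes dividing `|G|`, then `G` has an element of order `pq`, `pr` or `qr`. -/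
theorem three_primes (G : Type*) [Group G] [Finite G] [Group.IsSolvable G]
    (p q r : ℕ) (hp : p.Prime) (hq : q.Prime) (hr : r.Prime)
    (hpq : p ≠ q) (hpr : p ≠ r) (hqr : q ≠ r)
    (hdp : p ∣ Nat.card G) (hdq : q ∣ Nat.card G) (hdr : r ∣ Nat.card G) :
    ∃ g : G, orderOf g = p * q ∨ orderOf g = p * r ∨ orderOf g = q * r := by
  obtain ⟨H, hdp', hdq', hdr', hπ⟩ := aux_three_primes_sub (Nat.card G) G le_rfl p q r
    hp hq hr hpq hpr hqr hdp hdq hdr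
  obtain ⟨h, hh⟩ := aux_main (Nat.card ↥H) ↥H le_rfl p q r hp hq hr hpq hpr hqr
    hdp' hdq' hdr' hπ
  refine ⟨(h : G), ?_⟩
  rwa [Subgroup.orderOf_coe]
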